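/- Let n ≥ 3 be an integer. The set ℬ_n of triple points of the Böröczky configuration is finite and has cardinality ⌊n(n−3)/6⌋ + 1. -/

import Mathlib

open Complex

/-- `P n j = exp(2πij/n)`. -/
noncomputable def Ppt (n j : ℕ) : ℂ := Complex.exp (2 * Real.pi * Complex.I * j / n)

/-- `Q n j = -exp(-4πij/n)`. -/
noncomputable def Qpt (n j : ℕ) : ℂ := -Complex.exp (-(4 * Real.pi * Complex.I * j) / n)

open scoped Classical in
/-- The `j`-th line of the Böröczky configuration: the line through `P n j` and
`Q n j` if they are distinct, and the tangent line to the unit circle at `P n j`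
otherwise (identifying ℝ² with ℂ). -/
noncomputable def Bline (n j : ℕ) : Set ℂ :=
  if Ppt n j = Qpt n j then
    {z : ℂ | (z * (starRingEnd ℂ) (Ppt n j)).re = 1}
  else
    {z : ℂ | ((z - Ppt n j) * (starRingEnd ℂ) (Qpt n j - Ppt n j)).im = 0}

/-- The set of triple points of the Böröczky configuration: points lying on at
least three of the lines `L_0, …, L_{n-1}`. -/
def TriplePts (n : ℕ) : Set ℂ :=
  {z : ℂ | 3 ≤ ({j : ℕ | j < n ∧ z ∈ Bline n j} : Set ℕ).ncard}

noncomputable def Ee (n : ℕ) (k : ℤ) : ℂ := Complex.exp (2 * Real.pi * Complex.I * k / n)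

lemma Ee_add (n : ℕ) (j k : ℤ) : Ee n (j + k) = Ee n j * Ee n k := by
  rw [Ee, Ee, Ee, ← Complex.exp_add]
  congr 1
  push_cast
  ring

lemma Ee_ne_zero (n : ℕ) (k : ℤ) : Ee n k ≠ 0 := Complex.exp_ne_zero _

lemma conj_Ee (n : ℕ) (k : ℤ) : (starRingEnd ℂ) (Ee n k) = Ee n (-k) := by
  rw [Ee, Ee, ← Complex.exp_conj]
  congr 1
  rw [map_div₀]
  push_cast
  simp only [map_mul, Complex.conj_I, Complex.conj_ofNat, map_intCast,
    Complex.conj_ofReal, map_natCast]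
  ring

lemma Ee_mul_Ee_neg (n : ℕ) (k : ℤ) : Ee n k * Ee n (-k) = 1 := by
  rw [← Ee_add]; simp [Ee]

lemma Ee_eq_one_iff {n : ℕ} (hn : n ≠ 0) (k : ℤ) : Ee n k = 1 ↔ (n : ℤ) ∣ k := by
  rw [Ee, Complex.exp_eq_one_iff]
  constructor
  · rintro ⟨m, hm⟩
    refine ⟨m, ?_⟩
    have hn' : (n : ℂ) ≠ 0 := Nat.cast_ne_zero.mpr hn
    have hpi : (2 : ℂ) * Real.pi * I ≠ 0 := by
      simp [Real.pi_ne_zero, Complex.I_ne_zero]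
    have : (k : ℂ) = m * n := by
      field_simp at hm
      have := hm
      -- 2πI k = m * 2πI * n
      have h2 : (2 * (Real.pi:ℂ) * I) * k = (2 * (Real.pi:ℂ) * I) * (m * n) := by
        linear_combination (2 * (Real.pi:ℂ) * I) * this
      exact mul_left_cancel₀ hpi h2
    have : (k : ℂ) = ((n * m : ℤ) : ℂ) := by push_cast; rw [this]; ring
    exact_mod_cast this
  · rintro ⟨m, hm⟩
    refine ⟨m, ?_⟩
    have hn' : (n : ℂ) ≠ 0 := Nat.cast_ne_zero.mpr hn
    rw [hm]
    push_cast
    field_simp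

lemma Ee_eq_iff {n : ℕ} (hn : n ≠ 0) (j k : ℤ) : Ee n j = Ee n k ↔ (n : ℤ) ∣ j - k := by
  rw [← Ee_eq_one_iff hn (j - k)]
  constructor
  · intro h
    have : Ee n (j - k) * Ee n k = Ee n k := by
      rw [← Ee_add]; simp [h]
    exact mul_right_cancel₀ (Ee_ne_zero n k) (by rw [this, one_mul])
  · intro h
    have : Ee n j = Ee n (j - k) * Ee n k := by rw [← Ee_add]; ring_nf
    rw [this, h, one_mul]

lemma Ppt_eq (n j : ℕ) : Ppt n j = Ee n j := rfl

lemma Qpt_eq (n j : ℕ) : Qpt n j = -Ee n (-(2 * j)) := by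
  rw [Qpt, Ee]
  congr 2
  push_cast
  ring

/-- Membership in the j-th line, as a linear equation in z, conj z. -/
lemma mem_Bline_iff (n : ℕ) (j : ℕ) (z : ℂ) :
    z ∈ Bline n j ↔
      z - Ee n (-j) * (starRingEnd ℂ) z = Ee n j - Ee n (-(2 * j)) := by
  set u := Ee n (j : ℤ) with hu
  set v := Ee n (-(j : ℤ)) with hv
  have huv : u * v = 1 := Ee_mul_Ee_neg n j
  have hv2 : Ee n (-(2 * (j:ℤ))) = v * v := by
    rw [hv, ← Ee_add]; congr 1; ring
  have hcu : (starRingEnd ℂ) u = v := by rw [hu, conj_Ee, hv]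
  have hcv : (starRingEnd ℂ) v = u := by rw [hv, conj_Ee, neg_neg, hu]
  set w := (starRingEnd ℂ) z with hw
  have hP : Ppt n j = u := Ppt_eq n j
  have hQ : Qpt n j = -(v * v) := by rw [Qpt_eq, hv2]
  rw [Bline]
  have hvne : v ≠ 0 := Ee_ne_zero n _
  have hune : u ≠ 0 := Ee_ne_zero n _
  push_cast
  rw [hv2]
  split_ifs with h
  · -- tangent case : u = -(v*v)
    rw [hP, hQ] at h
    simp only [Set.mem_setOf_eq, hP, hcu]
    have key : z - v * w - (u - v * v) = (z * v + w * u - 2) * u := by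
      linear_combination (v * w - z) * huv + (1 - u * w) * h
    constructor
    · intro hre
      have h2 : z * v + w * u = 2 := by
        have hadd := Complex.add_conj (z * v)
        rw [map_mul, ← hw, hcv] at hadd
        rw [hadd, hre]
        norm_num
      have := key
      rw [h2] at this
      simpa [sub_eq_zero] using this
    · intro heq
      have h2 : z * v + w * u = 2 := by
        have h0 : (z * v + w * u - 2) * u = 0 := by
          rw [← key, heq]; ring
        rcases mul_eq_zero.mp h0 with h' | h'
        · linear_combination h'
        · exact absurd h' hune
      have hadd := Complex.add_conj (z * v)
      rw [map_mul, ← hw, hcv] at hadd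
      rw [hadd] at h2
      have : (2 : ℝ) * (z * v).re = 2 := by exact_mod_cast h2
      linarith
  · -- generic case
    rw [hP, hQ] at h
    simp only [Set.mem_setOf_eq, hP, hQ]
    have hKne : v + u * u ≠ 0 := by
      intro hK
      apply h
      have : (v + u * u) * v = v * v + u := by linear_combination u * huv
      rw [hK, zero_mul] at this
      have : u = -(v * v) := by linear_combination -this
      exact this
    have hid : ∀ Z W : ℂ, (Z - u) * (-(u * u) - v) - (W - v) * (-(v * v) - u)
        = (-(v + u * u)) * (Z - v * W - u + v * v) := by
      intro Z W
      linear_combination (u * v - u * W) * huv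
    have hconjQP : (starRingEnd ℂ) (-(v * v) - u) = -(u * u) - v := by
      rw [map_sub, map_neg, map_mul, hcv, hcu]
    rw [hconjQP]
    constructor
    · intro him
      have hre : (z - u) * (-(u * u) - v)
          = (starRingEnd ℂ) ((z - u) * (-(u * u) - v)) :=
        (Complex.conj_eq_iff_im.mpr him).symm
      rw [map_mul, map_sub, map_sub, map_neg, map_mul, hcu, hcv, ← hw] at hre
      have h0 : (-(v + u * u)) * (z - v * w - u + v * v) = 0 := by
        rw [← hid z w]
        linear_combination hre
      rcases mul_eq_zero.mp h0 with h' | h'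
      · exact absurd (neg_eq_zero.mp h') hKne
      · linear_combination h'
    · intro heq
      have h0 : (z - u) * (-(u * u) - v) - (w - v) * (-(v * v) - u) = 0 := by
        rw [hid z w]
        have : z - v * w - u + v * v = 0 := by linear_combination heq
        rw [this, mul_zero]
      have hre : (z - u) * (-(u * u) - v) = (starRingEnd ℂ) ((z - u) * (-(u * u) - v)) := by
        rw [map_mul, map_sub, map_sub, map_neg, map_mul, hcu, hcv, ← hw]
        linear_combination h0
      exact Complex.conj_eq_iff_im.mp hre.symm

noncomputable def Bline' (n j : ℕ) : Set ℂ := {z | z - Ee n (-j) * (starRingEnd ℂ) z = Ee n j - Ee n (-(2 * j))}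

lemma mod_unique {n s c c' : ℕ} (hc : c < n) (hc' : c' < n)
    (h1 : (s + c) % n = 0) (h2 : (s + c') % n = 0) : c = c' := by
  have h : (s + c) % n = (s + c') % n := by rw [h1, h2]
  have := Nat.ModEq.add_left_cancel' s (h : Nat.ModEq n (s + c) (s + c'))
  rw [Nat.ModEq, Nat.mod_eq_of_lt hc, Nat.mod_eq_of_lt hc'] at this
  exact this

lemma Ee_nat_inj {n a b : ℕ} (ha : a < n) (hb : b < n) (h : Ee n a = Ee n b) : a = b := by
  have hn : n ≠ 0 := by omega
  have hd := (Ee_eq_iff hn _ _).mp h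
  have : (a : ℤ) - b = 0 := by
    refine Int.eq_zero_of_abs_lt_dvd hd ?_
    rw [abs_lt]
    constructor <;> [push_cast; push_cast] <;> omega
  omega

lemma Ee_ne_of_ne {n a b : ℕ} (ha : a < n) (hb : b < n) (hab : a ≠ b) :
    Ee n a ≠ Ee n b := fun h => hab (Ee_nat_inj ha hb h)

lemma mem_two_lines {n a b : ℕ} (hn : n ≠ 0) (ha : a < n) (hb : b < n) (hab : a ≠ b) (z : ℂ) :
    (z ∈ Bline' n a ∧ z ∈ Bline' n b) ↔
      z = Ee n a + Ee n b + Ee n (-((a : ℤ) + b)) := by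
  set A := Ee n (a : ℤ) with hA
  set B := Ee n (b : ℤ) with hB
  set A' := Ee n (-(a : ℤ)) with hA'
  set B' := Ee n (-(b : ℤ)) with hB'
  set w := (starRingEnd ℂ) z with hw
  have hAA : A * A' = 1 := Ee_mul_Ee_neg n a
  have hBB : B * B' = 1 := Ee_mul_Ee_neg n b
  have hA2 : Ee n (-(2 * (a:ℤ))) = A' * A' := by rw [hA', ← Ee_add]; congr 1; ring
  have hB2 : Ee n (-(2 * (b:ℤ))) = B' * B' := by rw [hB', ← Ee_add]; congr 1; ring
  have hC : Ee n ((a : ℤ) + b) = A * B := Ee_add n a b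
  have hC' : Ee n (-((a : ℤ) + b)) = A' * B' := by
    rw [show -((a:ℤ) + b) = -a + -b by ring, Ee_add, hA', hB']
  have hABne : A' ≠ B' := by
    intro h
    apply Ee_ne_of_ne ha hb hab
    rcases (Ee_eq_iff hn _ _).mp h with ⟨m, hm⟩
    exact (Ee_eq_iff hn _ _).mpr ⟨-m, by linarith⟩
  simp only [Bline', Set.mem_setOf_eq, ← hw, hA2, hB2, ← hA, ← hB, ← hA', ← hB']
  constructor
  · rintro ⟨e1, e2⟩
    have hsub : (B' - A') * w = (A - A' * A') - (B - B' * B') := by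
      linear_combination e1 - e2
    have key : (B' - A') * (A * B + A' + B') = (A - A' * A') - (B - B' * B') := by
      linear_combination A * hBB - B * hAA
    have hwval : w = A * B + A' + B' :=
      mul_left_cancel₀ (sub_ne_zero.mpr (Ne.symm hABne)) (by rw [key, ← hsub])
    have hz : z = (starRingEnd ℂ) w := (Complex.conj_conj z).symm
    rw [hz, hwval, hC']
    simp only [map_add, map_mul, hA, hB, hA', hB', conj_Ee, neg_neg]
    ring
  · intro hz
    have hwval : w = A' + B' + A * B := by
      rw [hw, hz, hC']
      simp only [map_add, map_mul, hA, hB, hA', hB', conj_Ee, neg_neg]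
      try ring
    constructor
    · show z - A' * w = A - A' * A'
      rw [hz, hwval, hC']
      linear_combination (-B) * hAA
    · show z - B' * w = B - B' * B'
      rw [hz, hwval, hC']
      linear_combination (-A) * hBB

lemma three_lines {n a b c : ℕ} (hn : n ≠ 0) (ha : a < n) (hb : b < n) (hc : c < n)
    (hab : a ≠ b) (hac : a ≠ c) (hbc : b ≠ c) {z : ℂ}
    (h1 : z ∈ Bline' n a) (h2 : z ∈ Bline' n b) (h3 : z ∈ Bline' n c) :
    (a + b + c) % n = 0 ∧ z = Ee n a + Ee n b + Ee n c := by
  have e12 := (mem_two_lines hn ha hb hab z).mp ⟨h1, h2⟩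
  have e13 := (mem_two_lines hn ha hc hac z).mp ⟨h1, h3⟩
  set B := Ee n (b : ℤ) with hB
  set C := Ee n (c : ℤ) with hC
  set G := Ee n (-((a:ℤ) + b)) with hG
  set H := Ee n (-((a:ℤ) + c)) with hH
  have hsum : B + G = C + H := by linear_combination e13 - e12
  have hprod : B * G = C * H := by
    rw [hB, hG, hC, hH, ← Ee_add, ← Ee_add]
    congr 1; ring
  have hkey : (C - B) * (C - G) = 0 := by
    linear_combination (-C) * hsum + hprod
  have hCB : C ≠ B := Ee_ne_of_ne hc hb (Ne.symm hbc)
  have hCG : C = G := by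
    rcases mul_eq_zero.mp hkey with h' | h'
    · exact absurd (sub_eq_zero.mp h') hCB
    · exact sub_eq_zero.mp h'
  have hdvd : (n : ℤ) ∣ (c : ℤ) - (-((a:ℤ) + b)) := (Ee_eq_iff hn _ _).mp hCG
  constructor
  · have : (n : ℤ) ∣ ((a + b + c : ℕ) : ℤ) := by
      rcases hdvd with ⟨m, hm⟩
      exact ⟨m, by push_cast; linarith⟩
    have : n ∣ (a + b + c) := by exact_mod_cast this
    omega
  · rw [e12, hCG]
def Tfin (n : ℕ) : Finset (ℕ × ℕ × ℕ) :=
  (Finset.range n ×ˢ Finset.range n ×ˢ Finset.range n).filter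
    fun t => t.1 < t.2.1 ∧ t.2.1 < t.2.2 ∧ (t.1 + t.2.1 + t.2.2) % n = 0

def Afin (n : ℕ) : Finset (ℕ × ℕ × ℕ) :=
  (Finset.range n ×ˢ Finset.range n ×ˢ Finset.range n).filter
    fun t => (t.1 + t.2.1 + t.2.2) % n = 0

def Ofin (n : ℕ) : Finset (ℕ × ℕ × ℕ) :=
  (Afin n).filter fun t => t.1 ≠ t.2.1 ∧ t.1 ≠ t.2.2 ∧ t.2.1 ≠ t.2.2

/-- the complement to `s` modulo `n`. -/
def cc (n s : ℕ) : ℕ := (n - s % n) % n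

lemma cc_lt {n : ℕ} (hn : 0 < n) (s : ℕ) : cc n s < n := Nat.mod_lt _ hn

lemma cc_mod {n : ℕ} (hn : 0 < n) (s : ℕ) : (s + cc n s) % n = 0 := by
  unfold cc
  have hr : s % n < n := Nat.mod_lt _ hn
  rcases Nat.eq_zero_or_pos (s % n) with h | h
  · rw [h, Nat.sub_zero, Nat.mod_self, Nat.add_zero, h]
  · have h1 : (n - s % n) % n = n - s % n := Nat.mod_eq_of_lt (by omega)
    rw [h1, Nat.add_mod, h1, show s % n + (n - s % n) = n by omega, Nat.mod_self]

lemma mod_unique' {n s c c' : ℕ} (hc : c < n) (hc' : c' < n)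
    (h1 : (s + c) % n = 0) (h2 : (s + c') % n = 0) : c = c' := by
  have h : (s + c) % n = (s + c') % n := by rw [h1, h2]
  have := Nat.ModEq.add_left_cancel' s (h : Nat.ModEq n (s + c) (s + c'))
  rw [Nat.ModEq, Nat.mod_eq_of_lt hc, Nat.mod_eq_of_lt hc'] at this
  exact this

lemma mem_Afin {n : ℕ} {t : ℕ × ℕ × ℕ} :
    t ∈ Afin n ↔ t.1 < n ∧ t.2.1 < n ∧ t.2.2 < n ∧ (t.1 + t.2.1 + t.2.2) % n = 0 := by
  simp [Afin, Finset.mem_filter, Finset.mem_product, Finset.mem_range, and_assoc]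

lemma Afin_card {n : ℕ} (hn : 0 < n) : (Afin n).card = n * n := by
  have : (Afin n).card = (Finset.range n ×ˢ Finset.range n).card := by
    apply Finset.card_nbij' (fun t => (t.1, t.2.1)) (fun p => (p.1, p.2, cc n (p.1 + p.2)))
    · intro t ht
      rw [Finset.mem_coe, mem_Afin] at ht
      simp [Finset.mem_product, ht.1, ht.2.1]
    · intro p hp
      simp only [Finset.mem_coe, Finset.mem_product, Finset.mem_range] at hp
      rw [Finset.mem_coe, mem_Afin]
      exact ⟨hp.1, hp.2, cc_lt hn _, cc_mod hn _⟩
    · rintro ⟨a, b, c⟩ ht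
      rw [Finset.mem_coe, mem_Afin] at ht
      obtain ⟨h1, h2, h3, h4⟩ := ht
      have : cc n (a + b) = c := mod_unique' (cc_lt hn _) h3 (cc_mod hn _) h4
      simp [this]
    · intro p hp; rfl
  rw [this, Finset.card_product, Finset.card_range]

/-- triples with first two coordinates equal -/
lemma X_card {n : ℕ} (hn : 0 < n) :
    ((Afin n).filter fun t => t.1 = t.2.1).card = n := by
  have : ((Afin n).filter fun t => t.1 = t.2.1).card = (Finset.range n).card := by
    apply Finset.card_nbij' (fun t => t.1) (fun a => (a, a, cc n (a + a)))
    · intro t ht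
      rw [Finset.mem_coe, Finset.mem_filter, mem_Afin] at ht
      simp [ht.1.1]
    · intro a ha
      rw [Finset.mem_coe, Finset.mem_range] at ha
      rw [Finset.mem_coe, Finset.mem_filter, mem_Afin]
      exact ⟨⟨ha, ha, cc_lt hn _, cc_mod hn _⟩, rfl⟩
    · rintro ⟨a, b, c⟩ ht
      rw [Finset.mem_coe, Finset.mem_filter, mem_Afin] at ht
      obtain ⟨⟨h1, h2, h3, h4⟩, h5⟩ := ht
      simp only at h5
      subst h5
      have hc : cc n (a + a) = c := mod_unique' (cc_lt hn _) h3 (cc_mod hn _) h4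
      simp [hc]
    · intro a ha; rfl
  rw [this, Finset.card_range]

lemma Y_card {n : ℕ} (hn : 0 < n) :
    ((Afin n).filter fun t => t.1 = t.2.2).card = n := by
  have : ((Afin n).filter fun t => t.1 = t.2.2).card = (Finset.range n).card := by
    apply Finset.card_nbij' (fun t => t.1) (fun a => (a, cc n (a + a), a))
    · intro t ht
      rw [Finset.mem_coe, Finset.mem_filter, mem_Afin] at ht
      simp [ht.1.1]
    · intro a ha
      rw [Finset.mem_coe, Finset.mem_range] at ha
      rw [Finset.mem_coe, Finset.mem_filter, mem_Afin]
      refine ⟨⟨ha, cc_lt hn _, ha, ?_⟩, rfl⟩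
      rw [show a + cc n (a + a) + a = a + a + cc n (a + a) by omega]
      exact cc_mod hn _
    · rintro ⟨a, b, c⟩ ht
      rw [Finset.mem_coe, Finset.mem_filter, mem_Afin] at ht
      obtain ⟨⟨h1, h2, h3, h4⟩, h5⟩ := ht
      simp only at h5
      have hc : cc n (a + a) = b := by
        apply mod_unique' (cc_lt hn _) h2 (cc_mod hn _)
        rw [show a + a + b = a + b + a by omega]
        rw [h5] at h4 ⊢
        exact h4
      simp [hc, h5.symm]
    · intro a ha; rfl
  rw [this, Finset.card_range]

lemma Z_card {n : ℕ} (hn : 0 < n) :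
    ((Afin n).filter fun t => t.2.1 = t.2.2).card = n := by
  have : ((Afin n).filter fun t => t.2.1 = t.2.2).card = (Finset.range n).card := by
    apply Finset.card_nbij' (fun t => t.2.1) (fun a => (cc n (a + a), a, a))
    · intro t ht
      rw [Finset.mem_coe, Finset.mem_filter, mem_Afin] at ht
      simp [ht.1.2.1]
    · intro a ha
      rw [Finset.mem_coe, Finset.mem_range] at ha
      rw [Finset.mem_coe, Finset.mem_filter, mem_Afin]
      refine ⟨⟨cc_lt hn _, ha, ha, ?_⟩, rfl⟩
      rw [show cc n (a + a) + a + a = a + a + cc n (a + a) by omega]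
      exact cc_mod hn _
    · rintro ⟨a, b, c⟩ ht
      rw [Finset.mem_coe, Finset.mem_filter, mem_Afin] at ht
      obtain ⟨⟨h1, h2, h3, h4⟩, h5⟩ := ht
      simp only at h5
      subst h5
      have hc : cc n (b + b) = a := by
        apply mod_unique' (cc_lt hn _) h1 (cc_mod hn _)
        rw [show b + b + a = a + b + b by omega]
        exact h4
      simp [hc]
    · intro a ha; rfl
  rw [this, Finset.card_range]

lemma W_card {n : ℕ} (hn : 3 ≤ n) :
    ((Afin n).filter fun t => t.1 = t.2.1 ∧ t.1 = t.2.2).card = 1 ∨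
    ((Afin n).filter fun t => t.1 = t.2.1 ∧ t.1 = t.2.2).card = 3 := by
  have hn0 : 0 < n := by omega
  have hcard : ((Afin n).filter fun t => t.1 = t.2.1 ∧ t.1 = t.2.2).card
      = ((Finset.range n).filter fun a => (a + a + a) % n = 0).card := by
    apply Finset.card_nbij' (fun t => t.1) (fun a => (a, a, a))
    · intro t ht
      rw [Finset.mem_coe, Finset.mem_filter, mem_Afin] at ht
      obtain ⟨⟨h1, h2, h3, h4⟩, h5, h6⟩ := ht
      simp only [Finset.mem_coe, Finset.mem_filter, Finset.mem_range]
      refine ⟨h1, ?_⟩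
      rw [show t.1 + t.1 + t.1 = t.1 + t.2.1 + t.2.2 by omega]
      exact h4
    · intro a ha
      simp only [Finset.mem_coe, Finset.mem_filter, Finset.mem_range] at ha
      rw [Finset.mem_coe, Finset.mem_filter, mem_Afin]
      exact ⟨⟨ha.1, ha.1, ha.1, ha.2⟩, rfl, rfl⟩
    · rintro ⟨a, b, c⟩ ht
      rw [Finset.mem_coe, Finset.mem_filter] at ht
      obtain ⟨-, h5, h6⟩ := ht
      simp only at h5 h6
      simp [h5.symm, h6.symm]
    · intro a ha; rfl
  rw [hcard]
  by_cases h3 : 3 ∣ n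
  · right
    obtain ⟨m, rfl⟩ := h3
    have hm : 0 < m := by omega
    have : ((Finset.range (3 * m)).filter fun a => (a + a + a) % (3 * m) = 0)
        = {0, m, 2 * m} := by
      ext a
      simp only [Finset.mem_filter, Finset.mem_range, Finset.mem_insert, Finset.mem_singleton]
      constructor
      · rintro ⟨ha, hmod⟩
        have : (3 * m) ∣ (a + a + a) := Nat.dvd_of_mod_eq_zero hmod
        have hma : m ∣ a := by
          have : (3 * m) ∣ (3 * a) := by rw [show a + a + a = 3 * a by ring] at this; exact this
          obtain ⟨k, hk⟩ := this
          refine ⟨k, ?_⟩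
          have h9 : 3 * a = 3 * (m * k) := by linarith [hk]
          omega
        obtain ⟨k, hk⟩ := hma
        have hk3 : k < 3 := by
          by_contra hk3'
          push_neg at hk3'
          have h33 : 3 * m ≤ m * k := by
            calc 3 * m = m * 3 := by ring
            _ ≤ m * k := Nat.mul_le_mul_left m hk3'
          omega
        interval_cases k <;> omega
      · rintro (h | h | h) <;> rw [h]
        · exact ⟨by omega, by simp⟩
        · refine ⟨by omega, ?_⟩
          rw [show m + m + m = 3 * m by ring, Nat.mod_self]
        · refine ⟨by omega, ?_⟩
          rw [show 2*m + 2*m + 2*m = 2 * (3 * m) by ring, Nat.mul_mod_left]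
    rw [this]
    rw [Finset.card_insert_of_notMem (by simp; omega),
        Finset.card_insert_of_notMem (by simp; omega), Finset.card_singleton]
  · left
    have : ((Finset.range n).filter fun a => (a + a + a) % n = 0) = {0} := by
      ext a
      simp only [Finset.mem_filter, Finset.mem_range, Finset.mem_singleton]
      constructor
      · rintro ⟨ha, hmod⟩
        have hdvd : n ∣ 3 * a := by
          rw [show 3 * a = a + a + a by ring]
          exact Nat.dvd_of_mod_eq_zero hmod
        have hcop : Nat.Coprime n 3 :=
          (Nat.Prime.coprime_iff_not_dvd Nat.prime_three |>.mpr h3).symm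
        have hna : n ∣ a := hcop.dvd_of_dvd_mul_left hdvd
        exact Nat.eq_zero_of_dvd_of_lt hna ha
      · rintro rfl
        exact ⟨hn0, by simp⟩
    rw [this, Finset.card_singleton]

def perms (t : ℕ × ℕ × ℕ) : Finset (ℕ × ℕ × ℕ) :=
  {(t.1, t.2.1, t.2.2), (t.1, t.2.2, t.2.1), (t.2.1, t.1, t.2.2),
   (t.2.1, t.2.2, t.1), (t.2.2, t.1, t.2.1), (t.2.2, t.2.1, t.1)}

lemma mem_perms {s t : ℕ × ℕ × ℕ} :
    s ∈ perms t ↔ s = (t.1, t.2.1, t.2.2) ∨ s = (t.1, t.2.2, t.2.1) ∨ s = (t.2.1, t.1, t.2.2) ∨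
      s = (t.2.1, t.2.2, t.1) ∨ s = (t.2.2, t.1, t.2.1) ∨ s = (t.2.2, t.2.1, t.1) := by
  simp [perms]

lemma mem_Tfin {n : ℕ} {t : ℕ × ℕ × ℕ} :
    t ∈ Tfin n ↔ t.1 < n ∧ t.2.1 < n ∧ t.2.2 < n ∧ t.1 < t.2.1 ∧ t.2.1 < t.2.2 ∧
      (t.1 + t.2.1 + t.2.2) % n = 0 := by
  simp [Tfin, Finset.mem_filter, Finset.mem_product, Finset.mem_range, and_assoc]

lemma mem_Ofin {n : ℕ} {t : ℕ × ℕ × ℕ} :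
    t ∈ Ofin n ↔ t.1 < n ∧ t.2.1 < n ∧ t.2.2 < n ∧ (t.1 + t.2.1 + t.2.2) % n = 0 ∧
      t.1 ≠ t.2.1 ∧ t.1 ≠ t.2.2 ∧ t.2.1 ≠ t.2.2 := by
  simp [Ofin, Finset.mem_filter, mem_Afin, and_assoc]

lemma perms_sorted_eq {t t' s : ℕ × ℕ × ℕ} (ht : t.1 < t.2.1 ∧ t.2.1 < t.2.2)
    (ht' : t'.1 < t'.2.1 ∧ t'.2.1 < t'.2.2)
    (hs : s ∈ perms t) (hs' : s ∈ perms t') : t = t' := by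
  obtain ⟨a, b, c⟩ := t
  obtain ⟨d, e, f⟩ := t'
  simp only at ht ht'
  rw [mem_perms] at hs hs'
  simp only [Prod.mk.injEq] at hs hs' ⊢
  rcases hs with h|h|h|h|h|h <;> rcases hs' with h'|h'|h'|h'|h'|h' <;>
    (obtain ⟨h1, h2, h3⟩ := h) <;> (obtain ⟨h1', h2', h3'⟩ := h') <;> omega

lemma perms_card {t : ℕ × ℕ × ℕ} (ht : t.1 < t.2.1 ∧ t.2.1 < t.2.2) :
    (perms t).card = 6 := by
  obtain ⟨a, b, c⟩ := t
  simp only at ht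
  rw [perms]
  rw [Finset.card_insert_of_notMem (by simp [Prod.ext_iff]; omega),
      Finset.card_insert_of_notMem (by simp [Prod.ext_iff]; omega),
      Finset.card_insert_of_notMem (by simp [Prod.ext_iff]; omega),
      Finset.card_insert_of_notMem (by simp [Prod.ext_iff]; omega),
      Finset.card_insert_of_notMem (by simp [Prod.ext_iff]; omega),
      Finset.card_singleton]

lemma Ofin_eq_biUnion (n : ℕ) : Ofin n = (Tfin n).biUnion perms := by
  ext s
  rw [Finset.mem_biUnion, mem_Ofin]
  constructor
  · rintro ⟨h1, h2, h3, h4, h5, h6, h7⟩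
    obtain ⟨a, b, c⟩ := s
    simp only at h1 h2 h3 h4 h5 h6 h7
    rcases Nat.lt_or_ge a b with hab | hab <;> rcases Nat.lt_or_ge b c with hbc | hbc <;>
      rcases Nat.lt_or_ge a c with hac | hac
    · refine ⟨(a, b, c), ?_, mem_perms.mpr (by simp)⟩
      rw [mem_Tfin]
      refine ⟨?_, ?_, ?_, ?_, ?_, ?_⟩ <;> dsimp only <;>
        first
        | omega
        | (rw [show a + b + c = a + b + c by omega]; exact h4)
    · omega
    · refine ⟨(a, c, b), ?_, mem_perms.mpr (by simp)⟩
      rw [mem_Tfin]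
      refine ⟨?_, ?_, ?_, ?_, ?_, ?_⟩ <;> dsimp only <;>
        first
        | omega
        | (rw [show a + c + b = a + b + c by omega]; exact h4)
    · refine ⟨(c, a, b), ?_, mem_perms.mpr (by simp)⟩
      rw [mem_Tfin]
      refine ⟨?_, ?_, ?_, ?_, ?_, ?_⟩ <;> dsimp only <;>
        first
        | omega
        | (rw [show c + a + b = a + b + c by omega]; exact h4)
    · refine ⟨(b, a, c), ?_, mem_perms.mpr (by simp)⟩
      rw [mem_Tfin]
      refine ⟨?_, ?_, ?_, ?_, ?_, ?_⟩ <;> dsimp only <;>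
        first
        | omega
        | (rw [show b + a + c = a + b + c by omega]; exact h4)
    · refine ⟨(b, c, a), ?_, mem_perms.mpr (by simp)⟩
      rw [mem_Tfin]
      refine ⟨?_, ?_, ?_, ?_, ?_, ?_⟩ <;> dsimp only <;>
        first
        | omega
        | (rw [show b + c + a = a + b + c by omega]; exact h4)
    · omega
    · refine ⟨(c, b, a), ?_, mem_perms.mpr (by simp)⟩
      rw [mem_Tfin]
      refine ⟨?_, ?_, ?_, ?_, ?_, ?_⟩ <;> dsimp only <;>
        first
        | omega
        | (rw [show c + b + a = a + b + c by omega]; exact h4)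
  · rintro ⟨t, ht, hs⟩
    rw [mem_Tfin] at ht
    obtain ⟨a, b, c⟩ := t
    simp only at ht
    obtain ⟨h1, h2, h3, h4, h5, h6⟩ := ht
    rw [mem_perms] at hs
    obtain ⟨x, y, z⟩ := s
    simp only [Prod.mk.injEq] at hs ⊢
    rcases hs with ⟨e1,e2,e3⟩|⟨e1,e2,e3⟩|⟨e1,e2,e3⟩|⟨e1,e2,e3⟩|⟨e1,e2,e3⟩|⟨e1,e2,e3⟩ <;>
      subst e1 <;> subst e2 <;> subst e3 <;>
      refine ⟨by omega, by omega, by omega, ?_, by omega, by omega, by omega⟩ <;>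
      · simp only [Nat.add_comm, Nat.add_left_comm] at h6 ⊢
        exact h6

lemma Ofin_card_eq (n : ℕ) : (Ofin n).card = 6 * (Tfin n).card := by
  rw [Ofin_eq_biUnion, Finset.card_biUnion]
  · rw [Finset.sum_congr rfl (fun t ht => perms_card (by
      rw [mem_Tfin] at ht; exact ⟨ht.2.2.2.1, ht.2.2.2.2.1⟩)), Finset.sum_const,
      smul_eq_mul, mul_comm]
  · intro x hx y hy hxy
    rw [Function.onFun, Finset.disjoint_left]
    intro s hsx hsy
    rw [Finset.mem_coe, mem_Tfin] at hx hy
    exact hxy (perms_sorted_eq ⟨hx.2.2.2.1, hx.2.2.2.2.1⟩ ⟨hy.2.2.2.1, hy.2.2.2.2.1⟩ hsx hsy)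

lemma Tfin_card {n : ℕ} (hn : 3 ≤ n) : (Tfin n).card = n * (n - 3) / 6 + 1 := by
  have hn0 : 0 < n := by omega
  classical
  set X := (Afin n).filter fun t => t.1 = t.2.1 with hX
  set Y := (Afin n).filter fun t => t.1 = t.2.2 with hY
  set Z := (Afin n).filter fun t => t.2.1 = t.2.2 with hZ
  set W := (Afin n).filter (fun t => t.1 = t.2.1 ∧ t.1 = t.2.2) with hW
  have hXY : X ∩ Y = W := by
    rw [hX, hY, hW, ← Finset.filter_and]
  have hXZ : (X ∪ Y) ∩ Z = W := by
    rw [hX, hY, hZ, hW, ← Finset.filter_or, ← Finset.filter_and]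
    apply Finset.filter_congr
    intro t _
    constructor
    · rintro ⟨h1 | h1, h2⟩ <;> omega
    · rintro ⟨h1, h2⟩
      exact ⟨Or.inl h1, by omega⟩
  have hu1 : (X ∪ Y).card + W.card = X.card + Y.card := by
    rw [← hXY]; exact Finset.card_union_add_card_inter X Y
  have hu2 : (X ∪ Y ∪ Z).card + W.card = (X ∪ Y).card + Z.card := by
    rw [← hXZ]; exact Finset.card_union_add_card_inter _ Z
  have hOdiff : Ofin n = Afin n \ (X ∪ Y ∪ Z) := by
    rw [Ofin, hX, hY, hZ, ← Finset.filter_or, ← Finset.filter_or, ← Finset.filter_not]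
    apply Finset.filter_congr
    intro t _
    simp only [not_or]
    tauto
  have hsub : X ∪ Y ∪ Z ⊆ Afin n :=
    Finset.union_subset (Finset.union_subset (Finset.filter_subset _ _)
      (Finset.filter_subset _ _)) (Finset.filter_subset _ _)
  have hsdiff : (Ofin n).card + (X ∪ Y ∪ Z).card = (Afin n).card := by
    rw [hOdiff]; exact Finset.card_sdiff_add_card_eq_card hsub
  have hXc : X.card = n := X_card hn0
  have hYc : Y.card = n := Y_card hn0
  have hZc : Z.card = n := Z_card hn0
  have hWc : W.card = 1 ∨ W.card = 3 := W_card hn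
  have hAc : (Afin n).card = n * n := Afin_card hn0
  have hOc : (Ofin n).card = 6 * (Tfin n).card := Ofin_card_eq n
  have hnn : n * n = n * (n - 3) + 3 * n := by
    have h3 : n - 3 + 3 = n := by omega
    calc n * n = n * (n - 3 + 3) := by rw [h3]
    _ = n * (n - 3) + 3 * n := by ring
  rw [hAc, hnn] at hsdiff
  -- now pure linear arithmetic in the atoms
  generalize hM : n * (n - 3) = M at hsdiff ⊢
  omega


def TriplePtsAux (n : ℕ) : Set ℂ :=
  {z : ℂ | 3 ≤ ({j : ℕ | j < n ∧ z ∈ Bline' n j} : Set ℕ).ncard}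

lemma Bline_eq_Bline' (n j : ℕ) : Bline n j = Bline' n j :=
  Set.ext fun z => mem_Bline_iff n j z

lemma TriplePts_eq_Aux (n : ℕ) : TriplePts n = TriplePtsAux n := by
  unfold TriplePts TriplePtsAux
  simp only [Bline_eq_Bline']

noncomputable def ff (n : ℕ) (t : ℕ × ℕ × ℕ) : ℂ := Ee n t.1 + Ee n t.2.1 + Ee n t.2.2

lemma dvd_of_mod {n s : ℕ} (h : s % n = 0) : (n : ℤ) ∣ (s : ℤ) :=
  Int.natCast_dvd_natCast.mpr (Nat.dvd_of_mod_eq_zero h)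

lemma mem_lines_of_mem_Tfin {n : ℕ} (hn : n ≠ 0) {t : ℕ × ℕ × ℕ} (ht : t ∈ Tfin n) :
    ff n t ∈ Bline' n t.1 ∧ ff n t ∈ Bline' n t.2.1 ∧ ff n t ∈ Bline' n t.2.2 := by
  obtain ⟨a, b, c⟩ := t
  rw [mem_Tfin] at ht
  obtain ⟨ha, hb, hc, hab, hbc, hmod⟩ := ht
  simp only [ff]
  have hEc : Ee n c = Ee n (-((a : ℤ) + b)) := by
    rw [Ee_eq_iff hn]
    have := dvd_of_mod hmod
    rcases this with ⟨m, hm⟩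
    exact ⟨m, by push_cast at hm ⊢; linarith⟩
  have hEa : Ee n a = Ee n (-((b : ℤ) + c)) := by
    rw [Ee_eq_iff hn]
    have := dvd_of_mod hmod
    rcases this with ⟨m, hm⟩
    exact ⟨m, by push_cast at hm ⊢; linarith⟩
  have h12 := (mem_two_lines hn ha hb (by omega) _).mpr (by rw [← hEc])
  have h23 := (mem_two_lines hn hb hc (by omega) _).mpr
    (show Ee n a + Ee n b + Ee n c = Ee n b + Ee n c + Ee n (-((b:ℤ)+c)) by
      rw [← hEa]; ring)
  exact ⟨h12.1, h12.2, h23.2⟩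

lemma TriplePtsAux_eq {n : ℕ} (hn : 3 ≤ n) :
    TriplePtsAux n = ↑((Tfin n).image (ff n)) := by
  have hn0 : n ≠ 0 := by omega
  ext z
  simp only [TriplePtsAux, Set.mem_setOf_eq, Finset.coe_image, Set.mem_image, Finset.mem_coe]
  constructor
  · intro h3
    set J := {j : ℕ | j < n ∧ z ∈ Bline' n j} with hJ
    have hJfin : J.Finite := Set.Finite.subset (Set.finite_Iio n) (fun j hj => hj.1)
    have hcard : 2 < hJfin.toFinset.card := by
      rw [Set.ncard_eq_toFinset_card J hJfin] at h3
      omega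
    obtain ⟨a, ha, b, hb, c, hc, hab, hac, hbc⟩ := Finset.two_lt_card.mp hcard
    rw [Set.Finite.mem_toFinset] at ha hb hc
    have key : ∀ x y w : ℕ, x ∈ J → y ∈ J → w ∈ J → x < y → y < w →
        ∃ t ∈ Tfin n, ff n t = z := by
      intro x y w hx hy hw hxy hyw
      have h := three_lines hn0 hx.1 hy.1 hw.1 (by omega) (by omega) (by omega)
        hx.2 hy.2 hw.2
      exact ⟨(x, y, w), mem_Tfin.mpr ⟨hx.1, hy.1, hw.1, hxy, hyw, h.1⟩, h.2.symm⟩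
    rcases Nat.lt_or_ge a b with h1 | h1 <;> rcases Nat.lt_or_ge b c with h2 | h2 <;>
      rcases Nat.lt_or_ge a c with h3' | h3'
    · exact key a b c ha hb hc h1 h2
    · omega
    · exact key a c b ha hc hb (by omega) (by omega)
    · exact key c a b hc ha hb (by omega) (by omega)
    · exact key b a c hb ha hc (by omega) (by omega)
    · exact key b c a hb hc ha (by omega) (by omega)
    · omega
    · exact key c b a hc hb ha (by omega) (by omega)
  · rintro ⟨t, ht, rfl⟩
    have hmem := mem_lines_of_mem_Tfin hn0 ht
    rw [mem_Tfin] at ht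
    have hsub : {t.1, t.2.1, t.2.2} ⊆ {j : ℕ | j < n ∧ ff n t ∈ Bline' n j} := by
      intro j hj
      rcases hj with rfl | rfl | rfl
      · exact ⟨ht.1, hmem.1⟩
      · exact ⟨ht.2.1, hmem.2.1⟩
      · exact ⟨ht.2.2.1, hmem.2.2⟩
    have hfin : ({j : ℕ | j < n ∧ ff n t ∈ Bline' n j}).Finite :=
      Set.Finite.subset (Set.finite_Iio n) (fun j hj => hj.1)
    have h3 : ({t.1, t.2.1, t.2.2} : Set ℕ).ncard = 3 := by
      rw [Set.ncard_eq_three]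
      exact ⟨t.1, t.2.1, t.2.2, by omega, by omega, by omega, rfl⟩
    calc (3:ℕ) = ({t.1, t.2.1, t.2.2} : Set ℕ).ncard := h3.symm
    _ ≤ _ := Set.ncard_le_ncard hsub hfin

lemma ff_injOn {n : ℕ} (hn : 3 ≤ n) : Set.InjOn (ff n) ↑(Tfin n) := by
  have hn0 : n ≠ 0 := by omega
  intro t ht t' ht' heq
  rw [Finset.mem_coe] at ht ht'
  have hmem := mem_lines_of_mem_Tfin hn0 ht
  have hmem' := mem_lines_of_mem_Tfin hn0 ht'
  rw [← heq] at hmem'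
  rw [mem_Tfin] at ht ht'
  obtain ⟨a, b, c⟩ := t
  obtain ⟨d, e, f⟩ := t'
  simp only at ht ht' hmem hmem'
  obtain ⟨ha, hb, hc, hab, hbc, hmod⟩ := ht
  obtain ⟨hd, he, hf, hde, hef, hmod'⟩ := ht'
  have hin : ∀ x : ℕ, x < n → ff n (a, b, c) ∈ Bline' n x → (x = a ∨ x = b ∨ x = c) := by
    intro x hx hlx
    by_contra hcon
    push_neg at hcon
    obtain ⟨hxa, hxb, hxc⟩ := hcon
    have h := three_lines hn0 ha hb hx (by omega) (Ne.symm hxa) (Ne.symm hxb)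
      hmem.1 hmem.2.1 hlx
    exact hxc (mod_unique' hx hc h.1 hmod)
  have h1 := hin d hd hmem'.1
  have h2 := hin e he hmem'.2.1
  have h3 := hin f hf hmem'.2.2
  have : d = a ∧ e = b ∧ f = c := by
    rcases h1 with rfl|rfl|rfl <;> rcases h2 with rfl|rfl|rfl <;>
      rcases h3 with rfl|rfl|rfl <;> omega
  simp [Prod.ext_iff, this.1.symm, this.2.1.symm, this.2.2.symm]

/-- The set of triple points of the Böröczky configuration is finite of
cardinality `⌊n(n-3)/6⌋ + 1`. -/
theorem boroczky_card_triple_points (n : ℕ) (hn : 3 ≤ n) :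
    (TriplePts n).Finite ∧ (TriplePts n).ncard = n * (n - 3) / 6 + 1 := by
  rw [TriplePts_eq_Aux, TriplePtsAux_eq hn]
  constructor
  · exact Finset.finite_toSet _
  · rw [Set.ncard_coe_finset, Finset.card_image_of_injOn (ff_injOn hn), Tfin_card hn]
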